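/- For every real α > 0 and all natural numbers i and y, the secant-cut inequality e^{−iα}(1 + i − i·e^{−α}) − e^{−iα}(1 − e^{−α})·y ≤ e^{−αy} holds. (These are the secant cuts of the linearization CSP-L: the secant line of t ↦ e^{−αt} through the points (i, e^{−iα}) and (i+1, e^{−(i+1)α}) is a valid lower bound for e^{−αy} at every integer point y.) -/
import Mathlib


/-- The secant cut of `t ↦ exp (-α t)` through the points `(i, exp (-i α))` and
`(i+1, exp (-(i+1) α))` is a valid lower bound for `exp (-α y)` at every natural `y`. -/
theorem secant_cut_valid (α : ℝ) (hα : 0 < α) (i y : ℕ) :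
    Real.exp (-(i * α)) * (1 + (i : ℝ) - (i : ℝ) * Real.exp (-α))
      - Real.exp (-(i * α)) * (1 - Real.exp (-α)) * (y : ℝ)
    ≤ Real.exp (-(α * y)) := by
  have hp : (0:ℝ) < Real.exp (-((i:ℝ) * α)) := Real.exp_pos _
  rcases le_or_gt i y with h | h
  · obtain ⟨k, rfl⟩ := Nat.exists_eq_add_of_le h
    have hb : (1:ℝ) + (k:ℝ) * (Real.exp (-α) - 1) ≤ Real.exp (-α) ^ k := by
      have hx0 : (0:ℝ) < Real.exp (-α) := Real.exp_pos _
      have := one_add_mul_le_pow (a := Real.exp (-α) - 1) (by nlinarith) k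
      simpa using this
    have hE : Real.exp (-(α * ((i + k : ℕ) : ℝ)))
        = Real.exp (-((i:ℝ) * α)) * Real.exp (-α) ^ k := by
      rw [← Real.exp_nat_mul, ← Real.exp_add]
      push_cast
      ring_nf
    have hL : Real.exp (-((i:ℝ) * α)) * (1 + (i : ℝ) - (i : ℝ) * Real.exp (-α))
        - Real.exp (-((i:ℝ) * α)) * (1 - Real.exp (-α)) * (((i + k : ℕ)) : ℝ)
        = Real.exp (-((i:ℝ) * α)) * (1 + (k:ℝ) * (Real.exp (-α) - 1)) := by
      push_cast; ring
    rw [hL, hE]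
    exact mul_le_mul_of_nonneg_left hb hp.le
  · obtain ⟨k, rfl⟩ := Nat.exists_eq_add_of_le h.le
    have hsum : (2:ℝ) ≤ Real.exp α + Real.exp (-α) := by
      have h1 : Real.exp α * Real.exp (-α) = 1 := by
        rw [← Real.exp_add]; simp
      nlinarith [mul_nonneg (sq_nonneg (Real.exp α - 1)) (Real.exp_pos (-α)).le,
        Real.exp_pos (-α)]
    have hb : (1:ℝ) + (k:ℝ) * (1 - Real.exp (-α)) ≤ Real.exp α ^ k := by
      have h2 := one_add_mul_le_pow (a := Real.exp α - 1) (by nlinarith [Real.exp_pos α]) k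
      have h3 : (1:ℝ) + (k:ℝ) * (1 - Real.exp (-α)) ≤ 1 + (k:ℝ) * (Real.exp α - 1) := by
        have hk : (0:ℝ) ≤ (k:ℝ) := Nat.cast_nonneg k
        nlinarith
      calc (1:ℝ) + (k:ℝ) * (1 - Real.exp (-α)) ≤ 1 + (k:ℝ) * (Real.exp α - 1) := h3
        _ ≤ (1 + (Real.exp α - 1)) ^ k := h2
        _ = Real.exp α ^ k := by ring_nf
    set i' : ℕ := y + k with hi'
    have hE : Real.exp (-(α * (y:ℝ)))
        = Real.exp (-(((i':ℕ):ℝ) * α)) * Real.exp α ^ k := by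
      rw [← Real.exp_nat_mul, ← Real.exp_add]
      push_cast [hi']
      ring_nf
    have hL : Real.exp (-(((i':ℕ):ℝ) * α)) * (1 + ((i':ℕ) : ℝ) - ((i':ℕ) : ℝ) * Real.exp (-α))
        - Real.exp (-(((i':ℕ):ℝ) * α)) * (1 - Real.exp (-α)) * ((y:ℕ) : ℝ)
        = Real.exp (-(((i':ℕ):ℝ) * α)) * (1 + (k:ℝ) * (1 - Real.exp (-α))) := by
      push_cast [hi']; ring
    rw [hL, hE]
    exact mul_le_mul_of_nonneg_left hb (Real.exp_pos _).le
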